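/- Let X and Y be geodesic metric spaces, let Y be δ-thin-hyperbolic, and let f: X → Y be a (λ,S)-quasi-isometric embedding, i.e., λ^{-1}·d_X(x,x') − S ≤ d_Y(f(x), f(x')) ≤ λ·d_X(x,x') + S for all x, x' ∈ X, where λ ≥ 1 and S ≥ 0. Then there exists δ' ≥ 0 depending only on δ, λ and S such that X is δ'-thin-hyperbolic. In particular, Gromov hyperbolicity of geodesic metric spaces is invariant under quasi-isometries. -/

import Mathlib

/-- `γ` is a geodesic segment from `x` to `y`, parametrized by arclength on `[0, dist x y]`. -/
def IsGeodesicSegment {X : Type*} [MetricSpace X] (γ : ℝ → X) (x y : X) : Prop :=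
  γ 0 = x ∧ γ (dist x y) = y ∧
    ∀ s ∈ Set.Icc (0 : ℝ) (dist x y), ∀ t ∈ Set.Icc (0 : ℝ) (dist x y),
      dist (γ s) (γ t) = |s - t|

/-- A metric space is geodesic if any two points are joined by a geodesic segment. -/
def GeodesicSpace (X : Type*) [MetricSpace X] : Prop :=
  ∀ x y : X, ∃ γ : ℝ → X, IsGeodesicSegment γ x y

/-- `X` is `δ`-thin-hyperbolic: for every geodesic triangle, each point on any one of the
three sides lies within distance `δ` of the union of the other two sides. -/
def ThinTriangles (X : Type*) [MetricSpace X] (δ : ℝ) : Prop :=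
  ∀ (a b c : X) (γab γbc γca : ℝ → X),
    IsGeodesicSegment γab a b → IsGeodesicSegment γbc b c → IsGeodesicSegment γca c a →
    (∀ s ∈ Set.Icc (0 : ℝ) (dist a b),
      Metric.infDist (γab s) (γbc '' Set.Icc 0 (dist b c) ∪ γca '' Set.Icc 0 (dist c a)) ≤ δ) ∧
    (∀ s ∈ Set.Icc (0 : ℝ) (dist b c),
      Metric.infDist (γbc s) (γab '' Set.Icc 0 (dist a b) ∪ γca '' Set.Icc 0 (dist c a)) ≤ δ) ∧
    (∀ s ∈ Set.Icc (0 : ℝ) (dist c a),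
      Metric.infDist (γca s) (γab '' Set.Icc 0 (dist a b) ∪ γbc '' Set.Icc 0 (dist b c)) ≤ δ)

open Metric Set

variable {Y : Type*} [MetricSpace Y]

lemma IsGeodesicSegment.reverse {γ : ℝ → Y} {x y : Y} (h : IsGeodesicSegment γ x y) :
    IsGeodesicSegment (fun t => γ (dist x y - t)) y x := by
  obtain ⟨h0, h1, hiso⟩ := h
  have hd : dist y x = dist x y := dist_comm y x
  refine ⟨by simpa using h1, by simp [hd, h0], ?_⟩
  intro s hs t ht
  rw [hd] at hs ht
  have := hiso (dist x y - s) ⟨by linarith [hs.2], by linarith [hs.1]⟩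
    (dist x y - t) ⟨by linarith [ht.2], by linarith [ht.1]⟩
  rw [this]
  rw [abs_sub_comm]
  ring_nf

lemma exists_chain_min (c : ℕ → Y) (N : ℕ) (x : Y) :
    ∃ k ≤ N, dist x (c k) ≤ Metric.infDist x (c '' Set.Iic N) := by
  have hfin : (c '' Set.Iic N).Finite := (Set.finite_Iic N).image c
  have hne : (c '' Set.Iic N).Nonempty := ⟨c 0, ⟨0, Nat.zero_le N, rfl⟩⟩
  obtain ⟨y, hy, hdy⟩ := hfin.isCompact.exists_infDist_eq_dist hne x
  obtain ⟨k, hk, rfl⟩ := hy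
  exact ⟨k, hk, le_of_eq hdy.symm⟩

lemma chainA (δ : ℝ) (hδ : 0 ≤ δ) (hgeo : GeodesicSpace Y) (hthin : ThinTriangles Y δ)
    (K : ℝ) :
    ∀ (j N : ℕ), 1 ≤ N → N ≤ 2 ^ j → ∀ y : ℕ → Y,
      (∀ k < N, dist (y k) (y (k + 1)) ≤ K) →
      ∀ g : ℝ → Y, IsGeodesicSegment g (y 0) (y N) →
      ∀ t ∈ Set.Icc (0 : ℝ) (dist (y 0) (y N)),
        Metric.infDist (g t) (y '' Set.Iic N) ≤ δ * j + K := by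
  intro j
  induction j with
  | zero =>
    intro N hN1 hN2 y hgap g hg t ht
    interval_cases N
    have h01 : dist (y 0) (y 1) ≤ K := hgap 0 (by norm_num)
    have : dist (g t) (y 0) = t := by
      have := hg.2.2 t ht 0 ⟨le_refl 0, dist_nonneg⟩
      rw [hg.1] at this; rw [this]; rw [abs_of_nonneg (by linarith [ht.1])]; ring
    have hmem : y 0 ∈ y '' Set.Iic 1 := ⟨0, by norm_num, rfl⟩
    calc Metric.infDist (g t) (y '' Set.Iic 1) ≤ dist (g t) (y 0) :=
          Metric.infDist_le_dist_of_mem hmem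
      _ ≤ K := by rw [this]; linarith [ht.2, h01]
      _ = δ * (0:ℕ) + K := by norm_num
  | succ j ih =>
    intro N hN1 hN2 y hgap g hg t ht
    rcases eq_or_lt_of_le hN1 with h1 | h1
    · -- N = 1
      have hN : N = 1 := h1.symm
      subst hN
      have h01 : dist (y 0) (y 1) ≤ K := hgap 0 (by norm_num)
      have hdt : dist (g t) (y 0) = t := by
        have := hg.2.2 t ht 0 ⟨le_refl 0, dist_nonneg⟩
        rw [hg.1] at this; rw [this]; rw [abs_of_nonneg (by linarith [ht.1])]; ring
      have hmem : y 0 ∈ y '' Set.Iic 1 := ⟨0, by norm_num, rfl⟩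
      calc Metric.infDist (g t) (y '' Set.Iic 1) ≤ dist (g t) (y 0) :=
            Metric.infDist_le_dist_of_mem hmem
        _ ≤ K := by rw [hdt]; linarith [ht.2, h01]
        _ ≤ δ * (j+1 : ℕ) + K := by nlinarith [Nat.cast_nonneg (α := ℝ) (j+1)]
    · -- N ≥ 2
      set m := (N + 1) / 2 with hm
      have h2pow : (2:ℕ) ^ (j+1) = 2 * 2 ^ j := by rw [pow_succ]; ring
      have hm1 : 1 ≤ m := by omega
      have hmN : m ≤ N - 1 := by omega
      have hmj : m ≤ 2 ^ j := by omega
      have hNm1 : 1 ≤ N - m := by omega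
      have hNmj : N - m ≤ 2 ^ j := by omega
      obtain ⟨g₁, hg₁⟩ := hgeo (y 0) (y m)
      obtain ⟨g₂, hg₂⟩ := hgeo (y m) (y N)
      have hrev : IsGeodesicSegment (fun s => g (dist (y 0) (y N) - s)) (y N) (y 0) :=
        hg.reverse
      obtain ⟨_, _, hbul3⟩ := hthin (y 0) (y m) (y N) g₁ g₂ _ hg₁ hg₂ hrev
      set d := dist (y 0) (y N) with hd
      have hs : d - t ∈ Set.Icc (0:ℝ) (dist (y N) (y 0)) := by
        rw [dist_comm]; exact ⟨by linarith [ht.2], by linarith [ht.1]⟩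
      have hptU := hbul3 (d - t) hs
      have hpt : d - (d - t) = t := by ring
      rw [hpt] at hptU
      set U := g₁ '' Set.Icc 0 (dist (y 0) (y m)) ∪ g₂ '' Set.Icc 0 (dist (y m) (y N))
        with hU
      have hUne : U.Nonempty := by
        refine ⟨g₁ 0, Or.inl ⟨0, ⟨le_refl 0, dist_nonneg⟩, rfl⟩⟩
      refine le_of_forall_pos_le_add fun ε hε => ?_
      have hlt : Metric.infDist (g t) U < δ + ε := lt_of_le_of_lt hptU (by linarith)
      obtain ⟨q, hqU, hq⟩ := (Metric.infDist_lt_iff hUne).mp hlt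
      have hchain_ne : ∀ M : ℕ, (y '' Set.Iic M).Nonempty := fun M => ⟨y 0, 0, Nat.zero_le M, rfl⟩
      rcases hqU with hq1 | hq2
      · -- q on g₁, geodesic from y 0 to y m
        obtain ⟨u, hu, rfl⟩ := hq1
        have hih := ih m hm1 hmj y (fun k hk => hgap k (by omega)) g₁ hg₁ u hu
        have hsub : y '' Set.Iic m ⊆ y '' Set.Iic N := Set.image_mono (Set.Iic_subset_Iic.mpr (by omega))
        calc Metric.infDist (g t) (y '' Set.Iic N)
            ≤ Metric.infDist (g t) (y '' Set.Iic m) :=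
              Metric.infDist_le_infDist_of_subset hsub (hchain_ne m)
          _ ≤ Metric.infDist (g₁ u) (y '' Set.Iic m) + dist (g t) (g₁ u) :=
              Metric.infDist_le_infDist_add_dist
          _ ≤ δ * j + K + (δ + ε) := by linarith [hq.le]
          _ = δ * (j+1 : ℕ) + K + ε := by push_cast; ring
      · -- q on g₂, geodesic from y m to y N
        obtain ⟨u, hu, rfl⟩ := hq2
        set y' : ℕ → Y := fun k => y (m + k) with hy'
        have hy'0 : y' 0 = y m := by simp [hy']
        have hy'N : y' (N - m) = y N := by simp only [hy']; congr 1; omega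
        have hg₂' : IsGeodesicSegment g₂ (y' 0) (y' (N - m)) := by rw [hy'0, hy'N]; exact hg₂
        have hu' : u ∈ Set.Icc (0:ℝ) (dist (y' 0) (y' (N - m))) := by rw [hy'0, hy'N]; exact hu
        have hih := ih (N - m) hNm1 hNmj y'
          (fun k hk => by simpa [hy', Nat.add_assoc] using hgap (m + k) (by omega)) g₂ hg₂' u hu'
        have hsub : y' '' Set.Iic (N - m) ⊆ y '' Set.Iic N := by
          rintro _ ⟨k, hk, rfl⟩
          exact ⟨m + k, by simp at hk ⊢; omega, rfl⟩
        calc Metric.infDist (g t) (y '' Set.Iic N)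
            ≤ Metric.infDist (g t) (y' '' Set.Iic (N - m)) :=
              Metric.infDist_le_infDist_of_subset hsub ⟨y' 0, 0, Nat.zero_le _, rfl⟩
          _ ≤ Metric.infDist (g₂ u) (y' '' Set.Iic (N - m)) + dist (g t) (g₂ u) :=
              Metric.infDist_le_infDist_add_dist
          _ ≤ δ * j + K + (δ + ε) := by linarith [hq.le]
          _ = δ * (j+1 : ℕ) + K + ε := by push_cast; ring

lemma sqrt_add_le' {x y : ℝ} (hx : 0 ≤ x) (hy : 0 ≤ y) :
    Real.sqrt (x + y) ≤ Real.sqrt x + Real.sqrt y := by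
  have h : Real.sqrt (x+y) ≤ Real.sqrt ((Real.sqrt x + Real.sqrt y)^2) :=
    Real.sqrt_le_sqrt (by nlinarith [Real.sq_sqrt hx, Real.sq_sqrt hy, Real.sqrt_nonneg x, Real.sqrt_nonneg y])
  rwa [Real.sqrt_sq (by positivity)] at h

lemma quad_bound {A B D : ℝ} (hA : 0 ≤ A) (hB : 0 ≤ B) (hD : 0 ≤ D)
    (h : D ≤ A * Real.sqrt D + B) : D ≤ (A + Real.sqrt B)^2 := by
  by_contra hcon
  push_neg at hcon
  have ht : A + Real.sqrt B < Real.sqrt D := by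
    have := Real.sqrt_lt_sqrt (by positivity) hcon
    rwa [Real.sqrt_sq (by positivity)] at this
  nlinarith [Real.sq_sqrt hB, Real.sq_sqrt hD, Real.sqrt_nonneg B, Real.sqrt_nonneg D]

lemma clog_le_sqrt (N : ℕ) (hN : 1 ≤ N) :
    (Nat.clog 2 N : ℝ) ≤ 1 + 4 * Real.sqrt N := by
  rcases eq_or_lt_of_le hN with h1 | h1
  · rw [← h1]
    simp [Nat.clog_one_right]
    positivity
  · set c := Nat.clog 2 N with hc
    have hc1 : 1 ≤ c := by
      rw [hc]
      exact Nat.clog_pos (by norm_num) h1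
    have hpow : (2:ℕ) ^ (c - 1) < N := Nat.pow_pred_clog_lt_self (by norm_num) h1
    have hpowR : (2:ℝ) ^ (c - 1) < (N:ℝ) := by exact_mod_cast hpow
    have hlog : ((c:ℝ) - 1) * Real.log 2 ≤ Real.log N := by
      have h2 : Real.log ((2:ℝ) ^ (c-1)) ≤ Real.log N :=
        Real.log_le_log (by positivity) hpowR.le
      rw [Real.log_pow] at h2
      have : ((c - 1 : ℕ) : ℝ) = (c:ℝ) - 1 := by
        rw [Nat.cast_sub hc1]; norm_num
      rwa [this] at h2
    have hlogN : Real.log N ≤ 2 * Real.sqrt N := by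
      have hN0 : (0:ℝ) < N := by positivity
      have hsq : Real.log N = 2 * Real.log (Real.sqrt N) := by
        rw [Real.log_sqrt hN0.le]; ring
      have := Real.log_le_sub_one_of_pos (Real.sqrt_pos.mpr hN0)
      nlinarith [Real.sqrt_nonneg (N:ℝ)]
    have hl2 : (0.6931471803 : ℝ) < Real.log 2 := Real.log_two_gt_d9
    nlinarith [Real.sqrt_nonneg (N:ℝ)]

lemma min_step {K d x : ℝ} (hK : 0 ≤ K) :
    min x d ≤ min (x + K) d ∧ min (x + K) d ≤ min x d + K := by
  constructor
  · exact min_le_min (by linarith) le_rfl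
  · rcases le_total x d with h | h
    · rcases le_total (x + K) d with h2 | h2
      · rw [min_eq_left h2, min_eq_left h]
      · rw [min_eq_right h2, min_eq_left h]; linarith
    · rw [min_eq_right h, min_eq_right (by linarith)]; linarith

noncomputable def qiCB (δ lam S : ℝ) : ℝ :=
  (4*δ*Real.sqrt (2/(lam+S) + 12*lam) +
    Real.sqrt (δ + (lam+S) + 4*δ*Real.sqrt (3 + 2*lam*(2+S))))^2

noncomputable def qiD0 (δ lam S : ℝ) : ℝ := qiCB δ lam S + (lam+S) + 1

noncomputable def qiD1 (δ lam S : ℝ) : ℝ :=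
  qiD0 δ lam S + lam^2*(2*qiD0 δ lam S + 1 + S) + S

noncomputable def qiH (δ lam S : ℝ) : ℝ := qiD1 δ lam S + (lam + S)

lemma qiCB_nonneg (δ lam S : ℝ) : 0 ≤ qiCB δ lam S := by unfold qiCB; positivity

lemma qiD0_nonneg {δ lam S : ℝ} (hlam : 1 ≤ lam) (hS : 0 ≤ S) : 0 ≤ qiD0 δ lam S := by
  have := qiCB_nonneg δ lam S; unfold qiD0; linarith

lemma qiD1_nonneg {δ lam S : ℝ} (hlam : 1 ≤ lam) (hS : 0 ≤ S) : 0 ≤ qiD1 δ lam S := by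
  have := qiD0_nonneg (δ := δ) hlam hS; unfold qiD1; nlinarith

lemma qiH_nonneg {δ lam S : ℝ} (hlam : 1 ≤ lam) (hS : 0 ≤ S) : 0 ≤ qiH δ lam S := by
  have := qiD1_nonneg (δ := δ) hlam hS; unfold qiH; linarith

lemma exists_max_nat (F : ℕ → ℝ) (R : ℕ) : ∃ r ≤ R, ∀ r' ≤ R, F r' ≤ F r := by
  induction R with
  | zero => exact ⟨0, le_refl 0, fun r' hr' => by simp at hr'; simp [hr']⟩
  | succ R ih =>
    obtain ⟨r, hr, hmax⟩ := ih
    rcases le_total (F (R+1)) (F r) with h | h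
    · exact ⟨r, by omega, fun r' hr' => by
        rcases Nat.lt_or_ge r' (R+1) with h2 | h2
        · exact hmax r' (by omega)
        · have : r' = R + 1 := by omega
          rw [this]; exact h⟩
    · exact ⟨R+1, le_refl _, fun r' hr' => by
        rcases Nat.lt_or_ge r' (R+1) with h2 | h2
        · exact le_trans (hmax r' (by omega)) h
        · have : r' = R + 1 := by omega
          rw [this]⟩

set_option maxHeartbeats 1000000 in
lemma lemB {X : Type*} {Y : Type*} [MetricSpace X] [MetricSpace Y]
    (δ lam S : ℝ) (hδ : 0 ≤ δ) (hlam : 1 ≤ lam) (hS : 0 ≤ S)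
    (hYgeo : GeodesicSpace Y) (hthin : ThinTriangles Y δ)
    (f : X → Y)
    (hf : ∀ x x' : X, lam⁻¹ * dist x x' - S ≤ dist (f x) (f x') ∧
      dist (f x) (f x') ≤ lam * dist x x' + S)
    (a b : X) (γ : ℝ → X) (hγ : IsGeodesicSegment γ a b)
    (g : ℝ → Y) (hg : IsGeodesicSegment g (f a) (f b)) :
    ∀ u ∈ Set.Icc (0:ℝ) (dist (f a) (f b)),
      ∃ s ∈ Set.Icc (0:ℝ) (dist a b), dist (g u) (f (γ s)) ≤ qiD0 δ lam S := by
  set K := lam + S with hKdef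
  have hK1 : 1 ≤ K := by unfold K; linarith
  have hK0 : 0 < K := by linarith
  have hCB := qiCB_nonneg δ lam S
  set L := dist a b with hLdef
  set ℓ := dist (f a) (f b) with hldef
  have hL0 : 0 ≤ L := dist_nonneg
  have hl0 : 0 ≤ ℓ := dist_nonneg
  rcases lt_or_ge L 1 with hL1 | hL1
  · -- short case
    intro u hu
    refine ⟨0, ⟨le_refl 0, hL0⟩, ?_⟩
    have h1 : dist (g u) (f a) = u := by
      have := hg.2.2 u hu 0 ⟨le_refl 0, hl0⟩
      rw [hg.1] at this
      rw [this, abs_of_nonneg (by linarith [hu.1])]; ring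
    have h2 : ℓ ≤ lam * L + S := (hf a b).2
    rw [hγ.1, h1]
    have : u ≤ ℓ := hu.2
    unfold qiD0
    nlinarith [hu.2]
  · -- main case
    set N := ⌈L⌉₊ with hNdef
    have hN1 : 1 ≤ N := by
      rw [hNdef]; exact Nat.one_le_ceil_iff.mpr (by linarith)
    have hNL : L ≤ (N:ℝ) := Nat.le_ceil L
    have hNL2 : (N:ℝ) < L + 1 := Nat.ceil_lt_add_one hL0
    have hN0R : (0:ℝ) < N := by positivity
    set T := L / N with hTdef
    have hT0 : 0 < T := by positivity
    have hT1 : T ≤ 1 := by rw [hTdef]; rw [div_le_one hN0R]; exact hNL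
    have hT2 : 1/2 ≤ T := by
      rw [hTdef, le_div_iff₀ hN0R]; nlinarith
    have hNT : (N:ℝ) * T = L := by rw [hTdef]; field_simp
    set c : ℕ → Y := fun k => f (γ (min ((k:ℝ) * T) L)) with hcdef
    have hmem : ∀ k : ℕ, min ((k:ℝ) * T) L ∈ Set.Icc (0:ℝ) L := fun k =>
      ⟨le_min (by positivity) hL0, min_le_right _ _⟩
    have hmem' : ∀ k : ℕ, min ((k:ℝ) * T) L ∈ Set.Icc (0:ℝ) (dist a b) := hmem
    have hmem'' : ∀ k : ℕ, min (((k:ℝ)+1) * T) L ∈ Set.Icc (0:ℝ) (dist a b) := fun k =>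
      ⟨le_min (by positivity) hL0, min_le_right _ _⟩
    have hγiso := hγ.2.2
    have hc0 : c 0 = f a := by
      simp only [hcdef, Nat.cast_zero, zero_mul, min_eq_left hL0, hγ.1]
    have hcN : c N = f b := by
      simp only [hcdef, hNT, min_self, hγ.2.1]; exact congrArg f hγ.2.1
    have hstep : ∀ k : ℕ, |min ((k:ℝ) * T) L - min (((k:ℝ) + 1) * T) L| ≤ T := by
      intro k
      have hkk : ((k:ℝ) + 1) * T = (k:ℝ) * T + T := by ring
      rw [hkk]
      obtain ⟨h1, h2⟩ := min_step (K := T) (d := L) (x := (k:ℝ)*T) hT0.le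
      rw [abs_of_nonpos (by linarith)]
      linarith
    have hgap : ∀ k : ℕ, dist (c k) (c (k+1)) ≤ K := by
      intro k
      have hck : dist (c k) (c (k+1))
          = dist (f (γ (min ((k:ℝ)*T) L))) (f (γ (min ((((k+1):ℕ):ℝ)*T) L))) := rfl
      have hcast : ((((k+1):ℕ)):ℝ) = (k:ℝ) + 1 := by push_cast; ring
      rw [hck, hcast]
      have hx : dist (γ (min ((k:ℝ)*T) L)) (γ (min (((k:ℝ)+1)*T) L))
          = |min ((k:ℝ)*T) L - min (((k:ℝ)+1)*T) L| := hγiso _ (hmem' k) _ (hmem'' k)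
      have hup := (hf (γ (min ((k:ℝ)*T) L)) (γ (min (((k:ℝ)+1)*T) L))).2
      rw [hx] at hup
      have := hstep k
      calc dist (f (γ (min ((k:ℝ)*T) L))) (f (γ (min (((k:ℝ)+1)*T) L)))
          ≤ lam * |min ((k:ℝ)*T) L - min (((k:ℝ)+1)*T) L| + S := hup
        _ ≤ lam * T + S := by nlinarith [abs_nonneg (min ((k:ℝ)*T) L - min (((k:ℝ)+1)*T) L)]
        _ ≤ K := by rw [hKdef]; nlinarith
    have hlam0 : (0:ℝ) < lam := by linarith
    have hminN : ∀ k : ℕ, k ≤ N → min ((k:ℝ) * T) L = (k:ℝ) * T := by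
      intro k hk
      apply min_eq_left
      rw [← hNT]
      have : (k:ℝ) ≤ (N:ℝ) := by exact_mod_cast hk
      nlinarith
    have hcdist : ∀ k k' : ℕ, k ≤ N → k' ≤ N →
        |(k:ℝ) - (k':ℝ)| * T ≤ lam * (dist (c k) (c k') + S) := by
      intro k k' hk hk'
      have hlow := (hf (γ (min ((k:ℝ)*T) L)) (γ (min ((k':ℝ)*T) L))).1
      have hx : dist (γ (min ((k:ℝ)*T) L)) (γ (min ((k':ℝ)*T) L))
          = |(k:ℝ) - (k':ℝ)| * T := by
        rw [hγiso _ (hmem k) _ (hmem k'), hminN k hk, hminN k' hk', ← sub_mul, abs_mul,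
          abs_of_pos hT0]
      rw [hx] at hlow
      have hck : dist (c k) (c k')
          = dist (f (γ (min ((k:ℝ)*T) L))) (f (γ (min ((k':ℝ)*T) L))) := rfl
      rw [hck]
      have h2 : lam * (lam⁻¹ * (|(k:ℝ) - (k':ℝ)| * T) - S)
          ≤ lam * dist (f (γ (min ((k:ℝ)*T) L))) (f (γ (min ((k':ℝ)*T) L))) :=
        mul_le_mul_of_nonneg_left hlow hlam0.le
      rw [mul_sub, ← mul_assoc, mul_inv_cancel₀ (ne_of_gt hlam0), one_mul] at h2
      nlinarith
    set R := ⌈ℓ⌉₊ with hRdef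
    have hlR : ℓ ≤ (R:ℝ) := Nat.le_ceil ℓ
    set q : ℕ → Y := fun r => g (min (r:ℝ) ℓ) with hqdef
    have hqmem : ∀ r : ℕ, min ((r:ℝ)) ℓ ∈ Set.Icc (0:ℝ) ℓ := fun r =>
      ⟨le_min (by positivity) hl0, min_le_right _ _⟩
    have hq0 : q 0 = f a := by
      simp only [hqdef, Nat.cast_zero, min_eq_left hl0, hg.1]
    have hqR : q R = f b := by
      simp only [hqdef, min_eq_right hlR, hg.2.1]; exact hg.2.1
    obtain ⟨r₀, hr₀R, hmax⟩ := exists_max_nat (fun r => Metric.infDist (q r) (c '' Set.Iic N)) R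
    set D := Metric.infDist (q r₀) (c '' Set.Iic N) with hDdef
    have hD0 : 0 ≤ D := Metric.infDist_nonneg
    set t₀ := min (r₀:ℝ) ℓ with ht₀def
    have ht₀ : t₀ ∈ Set.Icc (0:ℝ) ℓ := hqmem r₀
    set p := q r₀ with hpdef
    have hpt : p = g t₀ := rfl
    have hDdist : ∀ k, k ≤ N → D ≤ dist p (c k) := fun k hk =>
      Metric.infDist_le_dist_of_mem ⟨k, hk, rfl⟩
    have hgiso := hg.2.2
    -- distances between points of g
    have hgd : ∀ s ∈ Set.Icc (0:ℝ) ℓ, ∀ t ∈ Set.Icc (0:ℝ) ℓ,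
        dist (g s) (g t) = |s - t| := hgiso
    -- the key bound
    have hDbound : D ≤ qiCB δ lam S + K := by
      have hu' : ∃ (r₁ i : ℕ) (g₁ : ℝ → Y), r₁ ≤ R ∧ i ≤ N ∧
          IsGeodesicSegment g₁ (q r₁) (c i) ∧
          min (r₁:ℝ) ℓ ≤ t₀ ∧ t₀ - min (r₁:ℝ) ℓ ≤ 2*D + 1 ∧
          dist (q r₁) (c i) ≤ D ∧
          (∀ w ∈ Set.Icc (0:ℝ) (dist (q r₁) (c i)), D ≤ dist p (g₁ w)) := by
        rcases le_or_gt t₀ (2*D) with hca | hcb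
        · obtain ⟨g₁, hg₁⟩ := hYgeo (q 0) (c 0)
          have hq0c0 : q 0 = c 0 := by rw [hq0, hc0]
          have hdist0 : dist (q 0) (c 0) = 0 := by rw [hq0c0, dist_self]
          have hmin0 : min (((0:ℕ)):ℝ) ℓ = 0 := by
            simp [min_eq_left hl0]
          refine ⟨0, 0, g₁, Nat.zero_le _, Nat.zero_le _, hg₁, ?_, ?_, ?_, ?_⟩
          · rw [hmin0]; exact ht₀.1
          · rw [hmin0]; linarith
          · rw [hdist0]; exact hD0
          · intro w hw
            rw [hdist0] at hw
            have hw0 : w = 0 := le_antisymm hw.2 hw.1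
            rw [hw0, hg₁.1, hq0c0]
            exact hDdist 0 (Nat.zero_le N)
        · have h2D0 : (0:ℝ) ≤ t₀ - 2*D := by linarith
          set r₁ := ⌊t₀ - 2*D⌋₊ with hr₁def
          have h1 : (r₁:ℝ) ≤ t₀ - 2*D := Nat.floor_le h2D0
          have h2 : t₀ - 2*D < (r₁:ℝ) + 1 := Nat.lt_floor_add_one _
          have hr₁ℓ : (r₁:ℝ) ≤ ℓ := by linarith [ht₀.2]
          have hminr₁ : min ((r₁:ℝ)) ℓ = (r₁:ℝ) := min_eq_left hr₁ℓ
          have hr₁R : r₁ ≤ R := by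
            have : (r₁:ℝ) ≤ (R:ℝ) := le_trans hr₁ℓ hlR
            exact_mod_cast this
          obtain ⟨i, hiN, hi⟩ := exists_chain_min c N (q r₁)
          have hd₁D : dist (q r₁) (c i) ≤ D := le_trans hi (hmax r₁ hr₁R)
          obtain ⟨g₁, hg₁⟩ := hYgeo (q r₁) (c i)
          have hdpq : dist p (q r₁) = t₀ - (r₁:ℝ) := by
            rw [hpt]
            show dist (g t₀) (g (min (r₁:ℝ) ℓ)) = _
            rw [hgd t₀ ht₀ _ (hqmem r₁), hminr₁, abs_of_nonneg (by linarith)]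
          refine ⟨r₁, i, g₁, hr₁R, hiN, hg₁, by rw [hminr₁]; linarith,
            by rw [hminr₁]; linarith, hd₁D, ?_⟩
          intro w hw
          have hgw : dist (g₁ 0) (g₁ w) = w := by
            have := hg₁.2.2 0 ⟨le_rfl, dist_nonneg⟩ w hw
            rw [this, abs_of_nonpos (by linarith [hw.1])]; ring
          have h3 : dist (g₁ w) (q r₁) = w := by rw [← hg₁.1, dist_comm]; exact hgw
          have htri := dist_triangle p (g₁ w) (q r₁)
          rw [h3, hdpq] at htri
          linarith [hw.2]
      have hv' : ∃ (r₂ j : ℕ) (g₂ : ℝ → Y), r₂ ≤ R ∧ j ≤ N ∧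
          IsGeodesicSegment g₂ (c j) (q r₂) ∧
          t₀ ≤ min (r₂:ℝ) ℓ ∧ min (r₂:ℝ) ℓ - t₀ ≤ 2*D + 1 ∧
          dist (c j) (q r₂) ≤ D ∧
          (∀ w ∈ Set.Icc (0:ℝ) (dist (c j) (q r₂)), D ≤ dist p (g₂ w)) := by
        rcases le_or_gt (ℓ - t₀) (2*D) with hca | hcb
        · obtain ⟨g₂, hg₂⟩ := hYgeo (c N) (q R)
          have hqRcN : c N = q R := by rw [hqR, hcN]
          have hdist0 : dist (c N) (q R) = 0 := by rw [hqRcN, dist_self]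
          have hminR : min ((R:ℝ)) ℓ = ℓ := min_eq_right hlR
          refine ⟨R, N, g₂, le_rfl, le_rfl, hg₂, ?_, ?_, ?_, ?_⟩
          · rw [hminR]; exact ht₀.2
          · rw [hminR]; linarith
          · rw [hdist0]; exact hD0
          · intro w hw
            rw [hdist0] at hw
            have hw0 : w = 0 := le_antisymm hw.2 hw.1
            rw [hw0, hg₂.1]
            exact hDdist N le_rfl
        · have h2D0 : (0:ℝ) ≤ t₀ + 2*D := by linarith [ht₀.1]
          set r₂ := ⌈t₀ + 2*D⌉₊ with hr₂def
          have h1 : t₀ + 2*D ≤ (r₂:ℝ) := Nat.le_ceil _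
          have h2 : (r₂:ℝ) < t₀ + 2*D + 1 := Nat.ceil_lt_add_one h2D0
          have hr₂R : r₂ ≤ R := Nat.ceil_le_ceil (by linarith)
          obtain ⟨j, hjN, hj⟩ := exists_chain_min c N (q r₂)
          have hd₂D : dist (q r₂) (c j) ≤ D := le_trans hj (hmax r₂ hr₂R)
          obtain ⟨g₂, hg₂⟩ := hYgeo (c j) (q r₂)
          have hx₂ge : t₀ + 2*D ≤ min (r₂:ℝ) ℓ := le_min h1 (by linarith)
          have hx₂le : min (r₂:ℝ) ℓ ≤ t₀ + 2*D + 1 :=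
            le_trans (min_le_left _ _) (by linarith)
          have hdpv : dist p (q r₂) = min (r₂:ℝ) ℓ - t₀ := by
            rw [hpt]
            show dist (g t₀) (g (min (r₂:ℝ) ℓ)) = _
            rw [hgd t₀ ht₀ _ (hqmem r₂), abs_of_nonpos (by linarith)]
            ring
          refine ⟨r₂, j, g₂, hr₂R, hjN, hg₂, by linarith, by linarith,
            by rw [dist_comm]; exact hd₂D, ?_⟩
          intro w hw
          have hgw : dist (g₂ w) (q r₂) = dist (c j) (q r₂) - w := by
            conv_lhs => rw [← hg₂.2.1]
            rw [hg₂.2.2 w hw _ ⟨dist_nonneg, le_rfl⟩, abs_of_nonpos (by linarith [hw.2])]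
            ring
          have htri := dist_triangle p (g₂ w) (q r₂)
          rw [hgw, hdpv] at htri
          have hd₂D' : dist (c j) (q r₂) ≤ D := by rw [dist_comm]; exact hd₂D
          linarith [hw.1]
      obtain ⟨r₁, i, g₁, hr₁R, hiN, hg₁, hx₁t, hx₁2D, hd₁D, hlow₁⟩ := hu'
      obtain ⟨r₂, j, g₂, hr₂R, hjN, hg₂, hx₂t, hx₂2D, hd₂D, hlow₂⟩ := hv'
      set x₁ := min (r₁:ℝ) ℓ with hx₁def
      set x₂ := min (r₂:ℝ) ℓ with hx₂def
      set d₁ := dist (q r₁) (c i) with hd₁def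
      set d₂ := dist (c j) (q r₂) with hd₂def
      have hd₁0 : 0 ≤ d₁ := dist_nonneg
      have hd₂0 : 0 ≤ d₂ := dist_nonneg
      set M₁ := ⌈d₁ / K⌉₊ with hM₁def
      set M₂ := ⌈d₂ / K⌉₊ with hM₂def
      set n₃ := max i j - min i j with hn₃def
      set c' : ℕ → Y := fun k => if i ≤ j then c (i + k) else c (i - k) with hc'def
      have hc'0 : c' 0 = c i := by
        simp only [hc'def]
        split <;> simp
      have hc'n : c' n₃ = c j := by
        simp only [hc'def, hn₃def]
        split_ifs with h
        · congr 1; omega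
        · congr 1; omega
      have hc'gap : ∀ k, k < n₃ → dist (c' k) (c' (k+1)) ≤ K := by
        intro k hk
        simp only [hc'def]
        split_ifs with h
        · have hh : i + (k+1) = (i+k) + 1 := by omega
          rw [hh]; exact hgap (i+k)
        · have hh : i - k = (i - (k+1)) + 1 := by omega
          rw [hh, dist_comm]
          exact hgap (i - (k+1))
      have hc'mem : ∀ k, k ≤ n₃ → D ≤ dist p (c' k) := by
        intro k hk
        simp only [hc'def]
        split_ifs with h
        · exact hDdist _ (by omega)
        · exact hDdist _ (by omega)
      have hd₁M : d₁ ≤ (M₁:ℝ) * K := by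
        have h1 : d₁ / K ≤ (M₁:ℝ) := Nat.le_ceil (d₁ / K)
        calc d₁ = (d₁/K)*K := by field_simp
          _ ≤ (M₁:ℝ) * K := mul_le_mul_of_nonneg_right h1 hK0.le
      have hd₂M : d₂ ≤ (M₂:ℝ) * K := by
        have h1 : d₂ / K ≤ (M₂:ℝ) := Nat.le_ceil (d₂ / K)
        calc d₂ = (d₂/K)*K := by field_simp
          _ ≤ (M₂:ℝ) * K := mul_le_mul_of_nonneg_right h1 hK0.le
      have hM₁le : (M₁:ℝ) ≤ d₁/K + 1 := (Nat.ceil_lt_add_one (by positivity)).le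
      have hM₂le : (M₂:ℝ) ≤ d₂/K + 1 := (Nat.ceil_lt_add_one (by positivity)).le
      set M := M₁ + n₃ + M₂ + 1 with hMdef
      set e : ℕ → Y := fun k =>
        if k ≤ M₁ then g₁ (min ((k:ℝ)*K) d₁)
        else if k ≤ M₁ + n₃ then c' (k - M₁)
        else g₂ (min (((k - M₁ - n₃ : ℕ):ℝ) * K) d₂) with hedef
      have hg₁d : g₁ d₁ = c i := hg₁.2.1
      have hg₂d : g₂ d₂ = q r₂ := hg₂.2.1
      have hE0 : e 0 = q r₁ := by
        simp only [hedef, if_pos (Nat.zero_le M₁), Nat.cast_zero, zero_mul,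
          min_eq_left hd₁0]
        exact hg₁.1
      have hEM₁ : e M₁ = c i := by
        simp only [hedef, if_pos (le_refl M₁), min_eq_right hd₁M]
        exact hg₁d
      have hEmid : e (M₁ + n₃) = c j := by
        by_cases hn : n₃ = 0
        · have hij : i = j := by omega
          rw [hn]
          simpa [hij] using hEM₁
        · simp only [hedef, if_neg (by omega : ¬ (M₁ + n₃ ≤ M₁)),
            if_pos (le_refl (M₁ + n₃))]
          have hh : M₁ + n₃ - M₁ = n₃ := by omega
          rw [hh, hc'n]
      have hEM : e M = q r₂ := by
        have h1 : ¬ (M ≤ M₁) := by omega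
        have h2 : ¬ (M ≤ M₁ + n₃) := by omega
        have h3 : M - M₁ - n₃ = M₂ + 1 := by omega
        simp only [hedef, if_neg h1, if_neg h2, h3]
        have h4 : d₂ ≤ (((M₂+1 : ℕ)):ℝ) * K := by
          push_cast
          linarith only [hd₂M, hK0.le]
        rw [min_eq_right h4]
        exact hg₂d
      have hminstep : ∀ (z d : ℝ), 0 ≤ d → |min z d - min (z + K) d| ≤ K := by
        intro z d hd
        obtain ⟨w1, w2⟩ := min_step (K := K) (d := d) (x := z) hK0.le
        rw [abs_of_nonpos (by linarith)]
        linarith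
      have hEgap : ∀ k, k < M → dist (e k) (e (k+1)) ≤ K := by
        intro k hk
        by_cases h1 : k + 1 ≤ M₁
        · have hk1 : k ≤ M₁ := by omega
          simp only [hedef, if_pos hk1, if_pos h1]
          have hm1 : min ((k:ℝ)*K) d₁ ∈ Set.Icc (0:ℝ) d₁ :=
            ⟨le_min (by positivity) hd₁0, min_le_right _ _⟩
          have hm2 : min (((k+1:ℕ):ℝ)*K) d₁ ∈ Set.Icc (0:ℝ) d₁ :=
            ⟨le_min (by positivity) hd₁0, min_le_right _ _⟩
          rw [hg₁.2.2 _ hm1 _ hm2]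
          have hcast : ((k+1:ℕ):ℝ)*K = (k:ℝ)*K + K := by push_cast; ring
          rw [hcast]
          exact hminstep _ _ hd₁0
        · by_cases h2 : k + 1 ≤ M₁ + n₃
          · rcases Nat.lt_or_ge M₁ k with hlt | hge
            · have he1 : e k = c' (k - M₁) := by
                simp only [hedef, if_neg (by omega : ¬ (k ≤ M₁)),
                  if_pos (by omega : k ≤ M₁ + n₃)]
              have he2 : e (k+1) = c' ((k - M₁) + 1) := by
                simp only [hedef, if_neg (by omega : ¬ (k + 1 ≤ M₁)), if_pos h2]
                congr 1
                omega
              rw [he1, he2]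
              exact hc'gap _ (by omega)
            · have hkM : k = M₁ := by omega
              have he1 : e k = c i := by rw [hkM, hEM₁]
              have he2 : e (k+1) = c' 1 := by
                simp only [hedef, if_neg (by omega : ¬ (k + 1 ≤ M₁)), if_pos h2]
                congr 1
                omega
              rw [he1, he2, ← hc'0]
              exact hc'gap 0 (by omega)
          · by_cases h3 : k ≤ M₁ + n₃
            · have hkM : k = M₁ + n₃ := by omega
              have he1 : e k = c j := by rw [hkM, hEmid]
              have he2 : e (k+1) = g₂ (min (((1:ℕ):ℝ) * K) d₂) := by
                have hidx : k + 1 - M₁ - n₃ = 1 := by omega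
                simp only [hedef, if_neg (by omega : ¬ (k + 1 ≤ M₁)),
                  if_neg (by omega : ¬ (k + 1 ≤ M₁ + n₃)), hidx]
              rw [he1, he2, ← hg₂.1]
              have hm2 : min (((1:ℕ):ℝ)*K) d₂ ∈ Set.Icc (0:ℝ) d₂ :=
                ⟨le_min (by positivity) hd₂0, min_le_right _ _⟩
              have habs : |0 - min (((1:ℕ):ℝ)*K) d₂| = min (((1:ℕ):ℝ)*K) d₂ := by
                rw [abs_sub_comm, sub_zero, abs_of_nonneg hm2.1]
              rw [hg₂.2.2 0 ⟨le_rfl, hd₂0⟩ _ hm2, habs]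
              exact le_trans (min_le_left _ _) (by norm_num)
            · have he1 : e k = g₂ (min (((k - M₁ - n₃ : ℕ):ℝ) * K) d₂) := by
                simp only [hedef, if_neg (by omega : ¬ (k ≤ M₁)), if_neg h3]
              have he2 : e (k+1) = g₂ (min ((((k - M₁ - n₃ : ℕ):ℝ) + 1) * K) d₂) := by
                simp only [hedef, if_neg (by omega : ¬ (k + 1 ≤ M₁)),
                  if_neg (by omega : ¬ (k + 1 ≤ M₁ + n₃))]
                congr 2
                have : k + 1 - M₁ - n₃ = (k - M₁ - n₃) + 1 := by omega
                rw [this]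
                push_cast
                ring
              rw [he1, he2]
              have hm1 : min (((k - M₁ - n₃ : ℕ):ℝ)*K) d₂ ∈ Set.Icc (0:ℝ) d₂ :=
                ⟨le_min (by positivity) hd₂0, min_le_right _ _⟩
              have hm2 : min ((((k - M₁ - n₃ : ℕ):ℝ) + 1)*K) d₂ ∈ Set.Icc (0:ℝ) d₂ :=
                ⟨le_min (by positivity) hd₂0, min_le_right _ _⟩
              rw [hg₂.2.2 _ hm1 _ hm2]
              have hcast : (((k - M₁ - n₃ : ℕ):ℝ) + 1) * K = ((k - M₁ - n₃ : ℕ):ℝ)*K + K := by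
                ring
              rw [hcast]
              exact hminstep _ _ hd₂0
      have hElow : ∀ k, k ≤ M → D ≤ dist p (e k) := by
        intro k hk
        simp only [hedef]
        split_ifs with h1 h2
        · exact hlow₁ _ ⟨le_min (by positivity) hd₁0, min_le_right _ _⟩
        · exact hc'mem _ (by omega)
        · exact hlow₂ _ ⟨le_min (by positivity) hd₂0, min_le_right _ _⟩
      have hqr₁ : q r₁ = g x₁ := rfl
      have hqr₂ : q r₂ = g x₂ := rfl
      have hx₁mem : x₁ ∈ Set.Icc (0:ℝ) ℓ := hqmem r₁
      have hx₂mem : x₂ ∈ Set.Icc (0:ℝ) ℓ := hqmem r₂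
      have hx₁x₂ : x₁ ≤ x₂ := le_trans hx₁t hx₂t
      have hdq : dist (q r₁) (q r₂) = x₂ - x₁ := by
        rw [hqr₁, hqr₂, hgd _ hx₁mem _ hx₂mem, abs_of_nonpos (by linarith only [hx₁x₂])]
        ring
      set G : ℝ → Y := fun t => g (x₁ + t) with hGdef
      have hG : IsGeodesicSegment G (q r₁) (q r₂) := by
        refine ⟨?_, ?_, ?_⟩
        · show g (x₁ + 0) = q r₁
          rw [add_zero]
        · rw [hdq]
          show g (x₁ + (x₂ - x₁)) = q r₂
          have : x₁ + (x₂ - x₁) = x₂ := by ring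
          rw [this]
        · intro s hs t ht
          rw [hdq] at hs ht
          show dist (g (x₁+s)) (g (x₁+t)) = |s - t|
          rw [hgd _ ⟨by linarith only [hs.1, hx₁mem.1], by linarith only [hs.2, hx₂mem.2]⟩
            _ ⟨by linarith only [ht.1, hx₁mem.1], by linarith only [ht.2, hx₂mem.2]⟩]
          congr 1
          ring
      have hGeod : IsGeodesicSegment G (e 0) (e M) := by rw [hE0, hEM]; exact hG
      have ht₀x : t₀ - x₁ ∈ Set.Icc (0:ℝ) (dist (e 0) (e M)) := by
        rw [hE0, hEM, hdq]
        exact ⟨by linarith only [hx₁t], by linarith only [hx₂t]⟩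
      have hpG : p = G (t₀ - x₁) := by
        rw [hpt]
        show _ = g (x₁ + (t₀ - x₁))
        congr 1
        ring
      set jj := Nat.clog 2 M with hjjdef
      have hM1 : 1 ≤ M := by omega
      have hMpow : M ≤ 2 ^ jj := Nat.le_pow_clog (by norm_num) M
      have hchain := chainA δ hδ hYgeo hthin K jj M hM1 hMpow e hEgap G hGeod (t₀ - x₁) ht₀x
      obtain ⟨k₀, hk₀M, hk₀⟩ := exists_chain_min e M (G (t₀ - x₁))
      have hDle : D ≤ δ * (jj:ℝ) + K := by
        have h1 : D ≤ dist p (e k₀) := hElow k₀ hk₀M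
        rw [hpG] at h1
        linarith only [h1, le_trans hk₀ hchain]
      have hjjb : (jj:ℝ) ≤ 1 + 4 * Real.sqrt M := clog_le_sqrt M hM1
      set α := 2/K + 12*lam with hαdef
      set β := (3:ℝ) + 2*lam*(2+S) with hβdef
      have hα0 : 0 ≤ α := by
        have h2K : 0 < 2/K := by positivity
        rw [hαdef]; linarith only [h2K, hlam]
      have hβ0 : 0 ≤ β := by
        have h1 : (0:ℝ) ≤ 2*lam*(2+S) :=
          mul_nonneg (mul_nonneg (by norm_num) (by linarith only [hlam])) (by linarith only [hS])
        rw [hβdef]; linarith only [h1]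
      have hMb : (M:ℝ) ≤ α * D + β := by
        have hM₁b : (M₁:ℝ) ≤ D/K + 1 := by
          have h2 : d₁/K ≤ D/K := by
            gcongr
          linarith
        have hM₂b : (M₂:ℝ) ≤ D/K + 1 := by
          have h2 : d₂/K ≤ D/K := by
            gcongr
          linarith
        have hij : (n₃:ℝ) = |(i:ℝ) - (j:ℝ)| := by
          rw [hn₃def, Nat.cast_sub (min_le_max)]
          rcases le_total i j with h | h
          · rw [max_eq_right h, min_eq_left h,
              abs_of_nonpos (sub_nonpos.mpr (by exact_mod_cast h))]
            push_cast
            ring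
          · rw [max_eq_left h, min_eq_right h,
              abs_of_nonneg (sub_nonneg.mpr (by exact_mod_cast h))]
        have hdij := hcdist i j hiN hjN
        rw [← hij] at hdij
        have hpq₁ : dist (q r₁) p ≤ 2*D + 1 := by
          rw [dist_comm, hpt, hqr₁, hgd _ ht₀ _ hx₁mem, abs_of_nonneg (by linarith only [hx₁t])]
          linarith only [hx₁2D]
        have hpq₂ : dist p (q r₂) ≤ 2*D + 1 := by
          rw [hpt, hqr₂, hgd _ ht₀ _ hx₂mem, abs_of_nonpos (by linarith only [hx₂t])]
          linarith only [hx₂2D]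
        have hcc : dist (c i) (c j) ≤ 6*D + 2 := by
          have t1 : dist (c i) (q r₁) ≤ D := by rw [dist_comm]; exact hd₁D
          have t2 : dist (q r₂) (c j) ≤ D := by rw [dist_comm]; exact hd₂D
          have t4 := dist_triangle4 (c i) (q r₁) p (q r₂)
          have t5 := dist_triangle (c i) (q r₂) (c j)
          linarith only [t1, t2, t4, t5, hpq₁, hpq₂]
        have h6 : (n₃:ℝ) * T ≤ lam * (6*D+2+S) := by
          have hmul : lam * (dist (c i) (c j) + S) ≤ lam * (6*D+2+S) :=
            mul_le_mul_of_nonneg_left (by linarith only [hcc]) hlam0.le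
          linarith only [hdij, hmul]
        have hn₃b : (n₃:ℝ) ≤ 2*lam*(6*D+2+S) := by
          have hn0 : (0:ℝ) ≤ (n₃:ℝ) := Nat.cast_nonneg n₃
          have hprod : 0 ≤ (n₃:ℝ) * (T - 1/2) :=
            mul_nonneg hn0 (by linarith : (0:ℝ) ≤ T - 1/2)
          linarith only [h6, hprod]
        have hMcast : (M:ℝ) = (M₁:ℝ) + (n₃:ℝ) + (M₂:ℝ) + 1 := by
          rw [hMdef]; push_cast; ring
        have hsplit : α * D = (2/K)*D + 12*lam*D := by rw [hαdef]; ring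
        have hDKK : (2/K)*D = D/K + D/K := by ring
        rw [hMcast, hβdef]
        rw [hsplit, hDKK]
        linarith only [hM₁b, hM₂b, hn₃b]
      have hsM : Real.sqrt (M:ℝ) ≤ Real.sqrt α * Real.sqrt D + Real.sqrt β := by
        calc Real.sqrt (M:ℝ) ≤ Real.sqrt (α*D + β) := Real.sqrt_le_sqrt hMb
          _ ≤ Real.sqrt (α*D) + Real.sqrt β := sqrt_add_le' (mul_nonneg hα0 hD0) hβ0
          _ = Real.sqrt α * Real.sqrt D + Real.sqrt β := by rw [Real.sqrt_mul hα0]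
      have hquad : D ≤ (4*δ*Real.sqrt α) * Real.sqrt D + (δ + K + 4*δ*Real.sqrt β) := by
        have h1 : D ≤ δ*(1 + 4*Real.sqrt (M:ℝ)) + K := by
          have h2 := mul_le_mul_of_nonneg_left hjjb hδ
          linarith only [h2, hDle]
        have hmul := mul_le_mul_of_nonneg_left hsM (by linarith : (0:ℝ) ≤ 4*δ)
        have hexp : 4*δ*(Real.sqrt α * Real.sqrt D + Real.sqrt β)
            = (4*δ*Real.sqrt α) * Real.sqrt D + 4*δ*Real.sqrt β := by ring
        rw [hexp] at hmul
        linarith only [hmul, h1]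
      have hfin := quad_bound (A := 4*δ*Real.sqrt α) (B := δ + K + 4*δ*Real.sqrt β)
        (by positivity) (by linarith only [hδ, hK1, mul_nonneg (mul_nonneg (by norm_num : (0:ℝ) ≤ 4) hδ) (Real.sqrt_nonneg β)]) hD0 hquad
      have hEq : qiCB δ lam S = (4*δ*Real.sqrt α + Real.sqrt (δ + K + 4*δ*Real.sqrt β))^2 := by
        rw [hαdef, hβdef, hKdef]
        rfl
      rw [hEq]
      linarith only [hfin, hK0.le]
    -- conclusion
    intro u hu
    set r := ⌊u⌋₊ with hrdef
    have hru : (r:ℝ) ≤ u := Nat.floor_le hu.1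
    have hur : u < (r:ℝ) + 1 := Nat.lt_floor_add_one u
    have hrl : (r:ℝ) ≤ ℓ := le_trans hru hu.2
    have hrR : r ≤ R := by
      have : (r:ℝ) ≤ (R:ℝ) := le_trans hrl hlR
      exact_mod_cast this
    have hminr : min ((r:ℝ)) ℓ = (r:ℝ) := min_eq_left hrl
    have hdgu : dist (g u) (q r) ≤ 1 := by
      have := hgd u hu (min (r:ℝ) ℓ) (hqmem r)
      rw [hqdef]
      rw [this, hminr, abs_of_nonneg (by linarith)]
      linarith
    have hinf : Metric.infDist (g u) (c '' Set.Iic N) ≤ D + 1 := by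
      calc Metric.infDist (g u) (c '' Set.Iic N)
          ≤ Metric.infDist (q r) (c '' Set.Iic N) + dist (g u) (q r) :=
            Metric.infDist_le_infDist_add_dist
        _ ≤ D + 1 := add_le_add (hmax r hrR) hdgu
    obtain ⟨k, hkN, hk⟩ := exists_chain_min c N (g u)
    refine ⟨min ((k:ℝ) * T) L, hmem k, ?_⟩
    have : dist (g u) (f (γ (min ((k:ℝ) * T) L))) ≤ D + 1 := le_trans hk hinf
    unfold qiD0
    linarith [hDbound]

set_option maxHeartbeats 1000000 in
lemma lemC {X : Type*} {Y : Type*} [MetricSpace X] [MetricSpace Y]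
    (δ lam S : ℝ) (hδ : 0 ≤ δ) (hlam : 1 ≤ lam) (hS : 0 ≤ S)
    (hYgeo : GeodesicSpace Y) (hthin : ThinTriangles Y δ)
    (f : X → Y)
    (hf : ∀ x x' : X, lam⁻¹ * dist x x' - S ≤ dist (f x) (f x') ∧
      dist (f x) (f x') ≤ lam * dist x x' + S)
    (a b : X) (γ : ℝ → X) (hγ : IsGeodesicSegment γ a b)
    (g : ℝ → Y) (hg : IsGeodesicSegment g (f a) (f b)) :
    ∀ s ∈ Set.Icc (0:ℝ) (dist a b),
      ∃ u ∈ Set.Icc (0:ℝ) (dist (f a) (f b)), dist (f (γ s)) (g u) ≤ qiH δ lam S := by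
  classical
  have hlam0 : (0:ℝ) < lam := by linarith
  have hD0 := qiD0_nonneg (δ := δ) hlam hS
  have hD1 := qiD1_nonneg (δ := δ) hlam hS
  set L := dist a b with hLdef
  set ℓ := dist (f a) (f b) with hldef
  have hL0 : 0 ≤ L := dist_nonneg
  have hl0 : 0 ≤ ℓ := dist_nonneg
  have hγiso := hγ.2.2
  intro s hs
  have hγs0 : dist (γ s) a = s := by
    have := hγiso s hs 0 ⟨le_rfl, hL0⟩
    rw [hγ.1] at this
    rw [this, abs_of_nonneg (by linarith [hs.1])]
    ring
  have hγsb : dist (γ s) b = L - s := by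
    have := hγiso s hs L ⟨hL0, le_rfl⟩
    rw [hγ.2.1] at this
    rw [this, abs_of_nonpos (by linarith [hs.2])]
    ring
  rcases lt_or_ge L 1 with hL1 | hL1
  · -- short case
    refine ⟨0, ⟨le_rfl, hl0⟩, ?_⟩
    rw [hg.1]
    have hup := (hf (γ s) a).2
    rw [hγs0] at hup
    have : dist (f (γ s)) (f a) ≤ lam * 1 + S := by nlinarith [hs.1, hs.2]
    rw [qiH, qiD1]
    nlinarith [sq_nonneg lam]
  · rcases eq_or_lt_of_le hl0 with hl | hl
    · -- degenerate image case : ℓ = 0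
      refine ⟨0, ⟨le_rfl, hl0⟩, ?_⟩
      rw [hg.1]
      have hba : dist (f b) (f a) = 0 := by
        rw [dist_comm]; exact hl.symm
      have hLS : L ≤ lam * S := by
        have h1 := (hf a b).1
        rw [← hldef, ← hl] at h1
        have h2 : lam * (lam⁻¹ * L - S) ≤ lam * 0 := mul_le_mul_of_nonneg_left h1 hlam0.le
        rw [mul_sub, ← mul_assoc, mul_inv_cancel₀ (ne_of_gt hlam0), one_mul] at h2
        linarith
      rcases le_total s (L/2) with hhalf | hhalf
      · have hup := (hf (γ s) a).2
        rw [hγs0] at hup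
        have hb : dist (f (γ s)) (f a) ≤ lam * (lam*S/2) + S := by nlinarith
        rw [qiH, qiD1]
        nlinarith [sq_nonneg lam, mul_nonneg (mul_nonneg hlam0.le hlam0.le) hS]
      · have hup := (hf (γ s) b).2
        rw [hγsb] at hup
        have htr := dist_triangle (f (γ s)) (f b) (f a)
        have hb : dist (f (γ s)) (f a) ≤ lam * (lam*S/2) + S := by nlinarith
        rw [qiH, qiD1]
        nlinarith [sq_nonneg lam, mul_nonneg (mul_nonneg hlam0.le hlam0.le) hS]
    · -- main case : L ≥ 1, ℓ > 0
      have hB := lemB δ lam S hδ hlam hS hYgeo hthin f hf a b γ hγ g hg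
      set R := ⌈ℓ⌉₊ with hRdef
      have hR1 : 1 ≤ R := Nat.one_le_ceil_iff.mpr hl
      have hlR : ℓ ≤ (R:ℝ) := Nat.le_ceil ℓ
      set q : ℕ → Y := fun r => g (min (r:ℝ) ℓ) with hqdef
      have hqmem : ∀ r : ℕ, min ((r:ℝ)) ℓ ∈ Set.Icc (0:ℝ) ℓ := fun r =>
        ⟨le_min (by positivity) hl0, min_le_right _ _⟩
      have hq0 : q 0 = f a := by
        simp only [hqdef, Nat.cast_zero, min_eq_left hl0, hg.1]
      have hqR : q R = f b := by
        simp only [hqdef, min_eq_right hlR, hg.2.1]; exact hg.2.1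
      have hgd := hg.2.2
      have hchoice : ∀ r : ℕ, ∃ sr, sr ∈ Set.Icc (0:ℝ) L ∧
          dist (q r) (f (γ sr)) ≤ qiD0 δ lam S := by
        intro r
        obtain ⟨sr, h1, h2⟩ := hB (min (r:ℝ) ℓ) (hqmem r)
        exact ⟨sr, h1, h2⟩
      choose σ hσmem hσd using hchoice
      set τ : ℕ → ℝ := fun r => if r = 0 then 0 else if R ≤ r then L else σ r with hτdef
      have hτmem : ∀ r, τ r ∈ Set.Icc (0:ℝ) L := by
        intro r
        simp only [hτdef]
        split_ifs
        · exact ⟨le_rfl, hL0⟩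
        · exact ⟨hL0, le_rfl⟩
        · exact hσmem r
      have hτd : ∀ r, r ≤ R → dist (q r) (f (γ (τ r))) ≤ qiD0 δ lam S := by
        intro r hr
        simp only [hτdef]
        split_ifs with h1 h2
        · subst h1
          rw [hq0, hγ.1, dist_self]
          exact hD0
        · have hrR : r = R := le_antisymm hr h2
          subst hrR
          rw [hqR, hγ.2.1, dist_self]
          exact hD0
        · exact hσd r
      have hτ0 : τ 0 = 0 := by simp [hτdef]
      have hτR : τ R = L := by
        simp only [hτdef, if_neg (by omega : ¬ (R = 0)), if_pos (le_refl R)]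
      set P : ℕ → Prop := fun r => τ r ≤ s with hPdef
      have hP0 : P 0 := by rw [hPdef]; simp only [hτ0]; exact hs.1
      set rs := Nat.findGreatest P R with hrsdef
      have hrsR : rs ≤ R := Nat.findGreatest_le R
      have hPrs : P rs := Nat.findGreatest_spec (Nat.zero_le R) hP0
      by_cases hcase : rs = R
      · have hsL : L ≤ s := by
          have h := hPrs
          rw [hPdef, hcase] at h
          simp only [hτR] at h
          exact h
        have hsEq : s = L := le_antisymm hs.2 hsL
        refine ⟨ℓ, ⟨hl0, le_rfl⟩, ?_⟩
        rw [hsEq, hγ.2.1, hg.2.1, dist_self]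
        exact qiH_nonneg (δ := δ) hlam hS
      · have hrsR' : rs < R := lt_of_le_of_ne hrsR hcase
        have hnP : ¬ P (rs + 1) :=
          Nat.findGreatest_is_greatest (Nat.lt_succ_self rs) (by omega)
        have hsrs : τ rs ≤ s := hPrs
        have hsrs' : s < τ (rs + 1) := by
          rw [hPdef] at hnP
          exact lt_of_not_ge hnP
        have hqq : dist (q rs) (q (rs+1)) ≤ 1 := by
          have hx := hgd _ (hqmem rs) _ (hqmem (rs+1))
          rw [hqdef]
          simp only
          rw [hx]
          have hc1 : ((rs+1:ℕ):ℝ) = (rs:ℝ) + 1 := by push_cast; ring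
          rw [hc1]
          obtain ⟨w1, w2⟩ := min_step (K := (1:ℝ)) (d := ℓ) (x := (rs:ℝ)) (by norm_num)
          rw [abs_of_nonpos (by linarith)]
          linarith
        have hd1 := hτd rs (by omega)
        have hd2 := hτd (rs+1) (by omega)
        have hff : dist (f (γ (τ rs))) (f (γ (τ (rs+1)))) ≤ 2*(qiD0 δ lam S) + 1 := by
          have t1 := dist_triangle4 (f (γ (τ rs))) (q rs) (q (rs+1)) (f (γ (τ (rs+1))))
          rw [dist_comm (f (γ (τ rs))) (q rs)] at t1
          linarith
        have hlow := (hf (γ (τ rs)) (γ (τ (rs+1)))).1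
        have hγd : dist (γ (τ rs)) (γ (τ (rs+1))) = |τ rs - τ (rs+1)| :=
          hγiso _ (hτmem rs) _ (hτmem (rs+1))
        rw [hγd] at hlow
        have habs : |τ rs - τ (rs+1)| ≤ lam * (2*(qiD0 δ lam S) + 1 + S) := by
          have h2 : lam * (lam⁻¹ * |τ rs - τ (rs+1)| - S)
              ≤ lam * (2*(qiD0 δ lam S) + 1) := by
            apply mul_le_mul_of_nonneg_left _ hlam0.le
            linarith
          rw [mul_sub, ← mul_assoc, mul_inv_cancel₀ (ne_of_gt hlam0), one_mul] at h2
          nlinarith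
        have hss : |s - τ rs| ≤ lam * (2*(qiD0 δ lam S) + 1 + S) := by
          rw [abs_of_nonneg (by linarith)]
          rw [abs_of_nonpos (by linarith)] at habs
          linarith
        have hfs : dist (f (γ s)) (f (γ (τ rs))) ≤ lam * (lam * (2*(qiD0 δ lam S) + 1 + S)) + S := by
          have hup := (hf (γ s) (γ (τ rs))).2
          rw [hγiso s hs _ (hτmem rs)] at hup
          have := mul_le_mul_of_nonneg_left hss hlam0.le
          linarith
        refine ⟨min (rs:ℝ) ℓ, hqmem rs, ?_⟩
        have htr := dist_triangle (f (γ s)) (f (γ (τ rs))) (q rs)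
        rw [dist_comm (f (γ (τ rs))) (q rs)] at htr
        have : dist (f (γ s)) (q rs) ≤ qiD1 δ lam S := by
          rw [qiD1]
          nlinarith [sq_nonneg lam]
        rw [qiH]
        have hqrs : q rs = g (min (rs:ℝ) ℓ) := rfl
        rw [← hqrs]
        linarith

set_option maxHeartbeats 1000000 in
lemma assemble {X : Type*} {Y : Type*} [MetricSpace X] [MetricSpace Y]
    (δ lam S : ℝ) (hδ : 0 ≤ δ) (hlam : 1 ≤ lam) (hS : 0 ≤ S)
    (hYgeo : GeodesicSpace Y) (hthin : ThinTriangles Y δ)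
    (f : X → Y)
    (hf : ∀ x x' : X, lam⁻¹ * dist x x' - S ≤ dist (f x) (f x') ∧
      dist (f x) (f x') ≤ lam * dist x x' + S)
    (a b c : X) (γab γbc γca : ℝ → X)
    (hab : IsGeodesicSegment γab a b) (hbc : IsGeodesicSegment γbc b c)
    (hca : IsGeodesicSegment γca c a) :
    ∀ s ∈ Set.Icc (0:ℝ) (dist a b),
      Metric.infDist (γab s) (γbc '' Set.Icc 0 (dist b c) ∪ γca '' Set.Icc 0 (dist c a))
        ≤ lam * (qiH δ lam S + δ + qiD0 δ lam S + S) := by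
  intro s hs
  have hlam0 : (0:ℝ) < lam := by linarith
  obtain ⟨gab, hgab⟩ := hYgeo (f a) (f b)
  obtain ⟨gbc, hgbc⟩ := hYgeo (f b) (f c)
  obtain ⟨gca, hgca⟩ := hYgeo (f c) (f a)
  obtain ⟨h1, h2, h3⟩ := hthin (f a) (f b) (f c) gab gbc gca hgab hgbc hgca
  obtain ⟨u, hu, hud⟩ := lemC δ lam S hδ hlam hS hYgeo hthin f hf a b γab hab gab hgab s hs
  have hbul := h1 u hu
  have hUne : (gbc '' Set.Icc 0 (dist (f b) (f c)) ∪
      gca '' Set.Icc 0 (dist (f c) (f a))).Nonempty :=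
    ⟨gbc 0, Or.inl ⟨0, ⟨le_rfl, dist_nonneg⟩, rfl⟩⟩
  refine le_of_forall_pos_le_add fun ε hε => ?_
  have hεl : 0 < ε / lam := by positivity
  obtain ⟨q₂, hq₂mem, hq₂⟩ := (Metric.infDist_lt_iff hUne).mp
    (lt_of_le_of_lt hbul (by linarith : δ < δ + ε/lam))
  have hrw : lam * (qiH δ lam S + δ + ε/lam + qiD0 δ lam S + S)
      = lam * (qiH δ lam S + δ + qiD0 δ lam S + S) + ε := by
    field_simp
    ring
  rcases hq₂mem with hbcmem | hcamem
  · obtain ⟨v, hv, rfl⟩ := hbcmem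
    obtain ⟨s₂, hs₂, hs₂d⟩ := lemB δ lam S hδ hlam hS hYgeo hthin f hf b c γbc hbc gbc hgbc v hv
    have htot : dist (f (γab s)) (f (γbc s₂))
        ≤ qiH δ lam S + (δ + ε/lam) + qiD0 δ lam S := by
      have t := dist_triangle4 (f (γab s)) (gab u) (gbc v) (f (γbc s₂))
      linarith [hq₂.le]
    have hlow := (hf (γab s) (γbc s₂)).1
    have hX : dist (γab s) (γbc s₂)
        ≤ lam * (qiH δ lam S + δ + ε/lam + qiD0 δ lam S + S) := by
      have h2' : lam * (lam⁻¹ * dist (γab s) (γbc s₂) - S)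
          ≤ lam * (qiH δ lam S + (δ + ε/lam) + qiD0 δ lam S) :=
        mul_le_mul_of_nonneg_left (by linarith) hlam0.le
      rw [mul_sub, ← mul_assoc, mul_inv_cancel₀ (ne_of_gt hlam0), one_mul] at h2'
      have hexp : lam * (qiH δ lam S + δ + ε/lam + qiD0 δ lam S + S)
          = lam * (qiH δ lam S + (δ + ε/lam) + qiD0 δ lam S) + lam * S := by ring
      rw [hexp]
      linarith
    have hmem2 : γbc s₂ ∈ γbc '' Set.Icc 0 (dist b c) ∪ γca '' Set.Icc 0 (dist c a) :=
      Or.inl ⟨s₂, hs₂, rfl⟩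
    have hfin := Metric.infDist_le_dist_of_mem (x := γab s) hmem2
    linarith
  · obtain ⟨v, hv, rfl⟩ := hcamem
    obtain ⟨s₂, hs₂, hs₂d⟩ := lemB δ lam S hδ hlam hS hYgeo hthin f hf c a γca hca gca hgca v hv
    have htot : dist (f (γab s)) (f (γca s₂))
        ≤ qiH δ lam S + (δ + ε/lam) + qiD0 δ lam S := by
      have t := dist_triangle4 (f (γab s)) (gab u) (gca v) (f (γca s₂))
      linarith [hq₂.le]
    have hlow := (hf (γab s) (γca s₂)).1
    have hX : dist (γab s) (γca s₂)
        ≤ lam * (qiH δ lam S + δ + ε/lam + qiD0 δ lam S + S) := by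
      have h2' : lam * (lam⁻¹ * dist (γab s) (γca s₂) - S)
          ≤ lam * (qiH δ lam S + (δ + ε/lam) + qiD0 δ lam S) :=
        mul_le_mul_of_nonneg_left (by linarith) hlam0.le
      rw [mul_sub, ← mul_assoc, mul_inv_cancel₀ (ne_of_gt hlam0), one_mul] at h2'
      have hexp : lam * (qiH δ lam S + δ + ε/lam + qiD0 δ lam S + S)
          = lam * (qiH δ lam S + (δ + ε/lam) + qiD0 δ lam S) + lam * S := by ring
      rw [hexp]
      linarith
    have hmem2 : γca s₂ ∈ γbc '' Set.Icc 0 (dist b c) ∪ γca '' Set.Icc 0 (dist c a) :=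
      Or.inr ⟨s₂, hs₂, rfl⟩
    have hfin := Metric.infDist_le_dist_of_mem (x := γab s) hmem2
    linarith

universe u v

/-- **Quasi-isometry invariance of Gromov hyperbolicity.** If `Y` is a `δ`-thin-hyperbolic
geodesic metric space, `X` is a geodesic metric space, and `f : X → Y` is a
`(λ, S)`-quasi-isometric embedding (`λ ≥ 1`, `S ≥ 0`), then `X` is `δ'`-thin-hyperbolic
for some `δ' ≥ 0` depending only on `δ`, `λ` and `S`. -/
theorem hyperbolicity_invariant_under_quasi_isometry (δ lam S : ℝ)
    (hδ : 0 ≤ δ) (hlam : 1 ≤ lam) (hS : 0 ≤ S) :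
    ∃ δ' : ℝ, 0 ≤ δ' ∧
      ∀ (X : Type u) (Y : Type v) [instX : MetricSpace X] [instY : MetricSpace Y],
        GeodesicSpace X → GeodesicSpace Y → ThinTriangles Y δ →
        ∀ f : X → Y,
          (∀ x x' : X, lam⁻¹ * dist x x' - S ≤ dist (f x) (f x') ∧
            dist (f x) (f x') ≤ lam * dist x x' + S) →
          ThinTriangles X δ' := by
  refine ⟨lam * (qiH δ lam S + δ + qiD0 δ lam S + S), ?_, ?_⟩
  · have h1 := qiH_nonneg (δ := δ) hlam hS
    have h2 := qiD0_nonneg (δ := δ) hlam hS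
    have hlam0 : (0:ℝ) ≤ lam := by linarith
    exact mul_nonneg hlam0 (by linarith)
  · intro X Y instX instY hXgeo hYgeo hthin f hf
    intro a b c γab γbc γca hab hbc hca
    refine ⟨?_, ?_, ?_⟩
    · exact assemble δ lam S hδ hlam hS hYgeo hthin f hf a b c γab γbc γca hab hbc hca
    · intro s hs
      rw [Set.union_comm]
      exact assemble δ lam S hδ hlam hS hYgeo hthin f hf b c a γbc γca γab hbc hca hab s hs
    · intro s hs
      exact assemble δ lam S hδ hlam hS hYgeo hthin f hf c a b γca γab γbc hca hab hbc s hs
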